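/- Let d ≥ 1 and let ℓ₁, …, ℓ_d be nonzero ℝ-linear forms on ℝ³, pairwise non-proportional, each extended ℂ-linearly to ℂ³. Let ℂL_i = {[v] ∈ ℂP² : ℓ_i(v) = 0} be the corresponding complex lines, let ℂA₀ = ℂL₁ ∪ … ∪ ℂL_d, and let Ṽ = C ∩ ℂA₀. Then the subspace ℂP² ∖ (ℝP² ∪ ℂA₀) is homeomorphic to the product (C ∖ Ṽ) × ℝ². -/

import Mathlib

open Projectivization

/-- The complex projective plane, as the projectivization of `ℂ³`. -/
abbrev CP2 : Type := Projectivization ℂ (Fin 3 → ℂ)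

noncomputable instance : TopologicalSpace CP2 :=
  inferInstanceAs (TopologicalSpace (Quotient _))

/-- Coordinatewise complex conjugation on `ℂ³`, as a semilinear map over `starRingEnd ℂ`. -/
def conjC3 : (Fin 3 → ℂ) →ₛₗ[starRingEnd ℂ] (Fin 3 → ℂ) where
  toFun v i := starRingEnd ℂ (v i)
  map_add' u v := by funext i; simp
  map_smul' c v := by funext i; simp

lemma conjC3_injective : Function.Injective conjC3 := fun _ _ h =>
  funext fun i => star_injective (congrFun h i)

/-- The complex conjugation involution of `ℂP²`, induced by coordinatewise
complex conjugation on `ℂ³`. -/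
noncomputable def conjCP2 : CP2 → CP2 := Projectivization.map conjC3 conjC3_injective

/-- The set of real points of `ℂP²`: points admitting a representative vector
all of whose coordinates are real. -/
def RP2 : Set CP2 :=
  {p | ∃ (v : Fin 3 → ℝ) (hv : (fun i => (v i : ℂ)) ≠ 0),
    p = Projectivization.mk ℂ (fun i => (v i : ℂ)) hv}

/-- The conic `C = {[v] ∈ ℂP² : v₀² + v₁² + v₂² = 0}`. -/
def conic : Set CP2 := {p | p.rep 0 ^ 2 + p.rep 1 ^ 2 + p.rep 2 ^ 2 = 0}

/-- The `ℂ`-linear extension to `ℂ³` of an `ℝ`-linear form `ℓ` on `ℝ³`. -/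
noncomputable def extC (l : (Fin 3 → ℝ) →ₗ[ℝ] ℝ) : (Fin 3 → ℂ) → ℂ :=
  fun v => ∑ i, (l (Pi.single i 1) : ℂ) * v i

/-- The complex line in `ℂP²` cut out by (the `ℂ`-linear extension of)
a real linear form `ℓ`. -/
noncomputable def cLine (l : (Fin 3 → ℝ) →ₗ[ℝ] ℝ) : Set CP2 :=
  {p | extC l p.rep = 0}

noncomputable section
namespace CLH

def dotc (u v : Fin 3 → ℂ) : ℂ := u 0 * v 0 + u 1 * v 1 + u 2 * v 2
def cj (v : Fin 3 → ℂ) : Fin 3 → ℂ := fun i => (starRingEnd ℂ) (v i)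
def Qv (v : Fin 3 → ℂ) : ℂ := dotc v v
def nv (v : Fin 3 → ℂ) : ℝ :=
  Complex.normSq (v 0) + Complex.normSq (v 1) + Complex.normSq (v 2)
def sv (v : Fin 3 → ℂ) : ℝ := Real.sqrt ((nv v) ^ 2 - Complex.normSq (Qv v))
def Zv (v : Fin 3 → ℂ) : Fin 3 → ℂ := fun i =>
  -(starRingEnd ℂ (Qv v)) * v i + ((nv v + sv v : ℝ) : ℂ) * starRingEnd ℂ (v i)

lemma nv_nonneg (v : Fin 3 → ℂ) : 0 ≤ nv v := by
  have := Complex.normSq_nonneg (v 0)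
  have := Complex.normSq_nonneg (v 1)
  have := Complex.normSq_nonneg (v 2)
  unfold nv; linarith

lemma nv_pos {v : Fin 3 → ℂ} (hv : v ≠ 0) : 0 < nv v := by
  rcases (nv_nonneg v).lt_or_eq with h | h
  · exact h
  · exfalso
    have h0 := Complex.normSq_nonneg (v 0)
    have h1 := Complex.normSq_nonneg (v 1)
    have h2 := Complex.normSq_nonneg (v 2)
    unfold nv at h
    apply hv
    funext i
    fin_cases i
    · show v 0 = 0; exact Complex.normSq_eq_zero.1 (by linarith)
    · show v 1 = 0; exact Complex.normSq_eq_zero.1 (by linarith)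
    · show v 2 = 0; exact Complex.normSq_eq_zero.1 (by linarith)

lemma dotc_self_cj (v : Fin 3 → ℂ) : dotc v (cj v) = (nv v : ℂ) := by
  simp only [dotc, cj, Complex.mul_conj, nv]
  push_cast
  ring

end CLH
namespace CLH
open Complex (normSq)
local notation "conj'" => starRingEnd ℂ

lemma hnC (v : Fin 3 → ℂ) : ((nv v : ℝ) : ℂ)
    = v 0 * conj' (v 0) + v 1 * conj' (v 1) + v 2 * conj' (v 2) :=
  (dotc_self_cj v).symm

lemma sq_sv {v : Fin 3 → ℂ} (hle : normSq (Qv v) ≤ nv v ^ 2) :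
    sv v ^ 2 = nv v ^ 2 - normSq (Qv v) :=
  Real.sq_sqrt (by linarith)

lemma hsC {v : Fin 3 → ℂ} (hle : normSq (Qv v) ≤ nv v ^ 2) :
    ((sv v : ℝ) : ℂ) ^ 2 = ((nv v : ℝ) : ℂ) ^ 2 - Qv v * conj' (Qv v) := by
  have h := sq_sv hle
  calc ((sv v : ℝ) : ℂ) ^ 2 = ((sv v ^ 2 : ℝ) : ℂ) := by push_cast; ring
    _ = ((nv v ^ 2 - normSq (Qv v) : ℝ) : ℂ) := by rw [h]
    _ = ((nv v : ℝ) : ℂ) ^ 2 - Qv v * conj' (Qv v) := by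
        push_cast
        rw [← Complex.mul_conj]

lemma dotc_Zv_Zv {v : Fin 3 → ℂ} (hle : normSq (Qv v) ≤ nv v ^ 2) :
    dotc (Zv v) (Zv v) = 0 := by
  have h1 := hnC v
  have h2 := hsC hle
  simp only [dotc, Qv, Zv, cj, map_add, map_mul, map_neg, Complex.conj_conj,
    Complex.conj_ofReal] at *
  push_cast at *
  linear_combination (conj' (v 0) * conj' (v 0) + conj' (v 1) * conj' (v 1) + conj' (v 2) * conj' (v 2)) * h2 + 2 * (conj' (v 0) * conj' (v 0) + conj' (v 1) * conj' (v 1) + conj' (v 2) * conj' (v 2)) * (((nv v : ℝ):ℂ) + ((sv v : ℝ):ℂ)) * h1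

lemma dotc_v_Zv {v : Fin 3 → ℂ} (hle : normSq (Qv v) ≤ nv v ^ 2) :
    dotc v (Zv v) = ((sv v * (sv v + nv v) : ℝ) : ℂ) := by
  have h1 := hnC v
  have h2 := hsC hle
  simp only [dotc, Qv, Zv, cj, map_add, map_mul, map_neg, Complex.conj_conj,
    Complex.conj_ofReal] at *
  push_cast at *
  linear_combination (-(((nv v : ℝ):ℂ) + ((sv v : ℝ):ℂ))) * h1 - h2

lemma sv_pos {v : Fin 3 → ℂ} (hlt : normSq (Qv v) < nv v ^ 2) : 0 < sv v :=
  Real.sqrt_pos.2 (by linarith)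

lemma Zv_ne_zero {v : Fin 3 → ℂ} (hv : v ≠ 0) (hlt : normSq (Qv v) < nv v ^ 2) :
    Zv v ≠ 0 := by
  intro h
  have h1 : dotc v (Zv v) = 0 := by simp [dotc, h]
  rw [dotc_v_Zv hlt.le] at h1
  have hs := sv_pos hlt
  have hn := nv_pos hv
  have : sv v * (sv v + nv v) ≠ 0 := by positivity
  exact this (by exact_mod_cast h1)

lemma comb_Zv {v : Fin 3 → ℂ} (hle : normSq (Qv v) ≤ nv v ^ 2) (i : Fin 3) :
    ((nv v + sv v : ℝ) : ℂ) * cj (Zv v) i + Qv v * Zv v i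
      = ((2 * sv v * (nv v + sv v) : ℝ) : ℂ) * v i := by
  have h2 := hsC hle
  simp only [Zv, cj, map_add, map_mul, map_neg, Complex.conj_conj,
    Complex.conj_ofReal]
  push_cast
  linear_combination (-(v i)) * h2
end CLH
namespace CLH
open Complex (normSq)
local notation "conj'" => starRingEnd ℂ

lemma Qv_smul (a : ℂ) (v : Fin 3 → ℂ) : Qv (a • v) = a ^ 2 * Qv v := by
  simp only [Qv, dotc, Pi.smul_apply, smul_eq_mul]; ring

lemma nv_smul (a : ℂ) (v : Fin 3 → ℂ) : nv (a • v) = normSq a * nv v := by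
  simp only [nv, Pi.smul_apply, smul_eq_mul, Complex.normSq_mul]; ring

lemma sv_smul (a : ℂ) (v : Fin 3 → ℂ) : sv (a • v) = normSq a * sv v := by
  unfold sv
  rw [Qv_smul, nv_smul]
  have h1 : Complex.normSq (a ^ 2 * Qv v) = normSq a ^ 2 * normSq (Qv v) := by
    simp [Complex.normSq_mul, map_pow]
  rw [h1]
  have h2 : (normSq a * nv v) ^ 2 - normSq a ^ 2 * normSq (Qv v)
      = (normSq a) ^ 2 * ((nv v) ^ 2 - normSq (Qv v)) := by ring
  rw [h2, Real.sqrt_mul (sq_nonneg _), Real.sqrt_sq (Complex.normSq_nonneg a)]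

lemma cj_smul (a : ℂ) (v : Fin 3 → ℂ) : cj (a • v) = conj' a • cj v :=
  funext fun i => by simp [cj]

lemma Zv_smul (a : ℂ) (v : Fin 3 → ℂ) :
    Zv (a • v) = ((normSq a : ℂ) * conj' a) • Zv v := by
  funext i
  have h : ((normSq a : ℝ) : ℂ) = a * conj' a := (Complex.mul_conj a).symm
  simp only [Zv, Pi.smul_apply, smul_eq_mul, Qv_smul, nv_smul, sv_smul, map_mul, map_pow]
  push_cast
  simp only [h]
  ring

lemma extC_eq3 (l : (Fin 3 → ℝ) →ₗ[ℝ] ℝ) (v : Fin 3 → ℂ) :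
    extC l v = (l (Pi.single 0 1) : ℂ) * v 0 + (l (Pi.single 1 1) : ℂ) * v 1
      + (l (Pi.single 2 1) : ℂ) * v 2 := by
  simp [extC, Fin.sum_univ_three]

lemma extC_smul (l : (Fin 3 → ℝ) →ₗ[ℝ] ℝ) (a : ℂ) (v : Fin 3 → ℂ) :
    extC l (a • v) = a * extC l v := by
  simp only [extC_eq3, Pi.smul_apply, smul_eq_mul]; ring

lemma extC_cj (l : (Fin 3 → ℝ) →ₗ[ℝ] ℝ) (v : Fin 3 → ℂ) :
    extC l (cj v) = conj' (extC l v) := by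
  simp only [extC_eq3, cj, map_add, map_mul, Complex.conj_ofReal]

lemma rep_mk {v : Fin 3 → ℂ} (hv : v ≠ 0) :
    ∃ a : ℂˣ, (Projectivization.mk ℂ v hv).rep = (a : ℂ) • v := by
  have h := Projectivization.mk_rep (Projectivization.mk ℂ v hv)
  rw [Projectivization.mk_eq_mk_iff] at h
  obtain ⟨a, ha⟩ := h
  exact ⟨a, ha.symm⟩

lemma Qv_rep_eq (p : CP2) : p.rep 0 ^ 2 + p.rep 1 ^ 2 + p.rep 2 ^ 2 = Qv p.rep := by
  simp only [Qv, dotc]; ring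

lemma mem_conic_iff {v : Fin 3 → ℂ} (hv : v ≠ 0) :
    Projectivization.mk ℂ v hv ∈ conic ↔ Qv v = 0 := by
  obtain ⟨a, ha⟩ := rep_mk hv
  have hq : Qv (Projectivization.mk ℂ v hv).rep = (a : ℂ) ^ 2 * Qv v := by
    rw [ha, Qv_smul]
  unfold conic
  rw [Set.mem_setOf_eq, Qv_rep_eq, hq, mul_eq_zero]
  simp [pow_eq_zero_iff, a.ne_zero]

lemma mem_cLine_iff {v : Fin 3 → ℂ} (hv : v ≠ 0) (l : (Fin 3 → ℝ) →ₗ[ℝ] ℝ) :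
    Projectivization.mk ℂ v hv ∈ cLine l ↔ extC l v = 0 := by
  obtain ⟨a, ha⟩ := rep_mk hv
  unfold cLine
  rw [Set.mem_setOf_eq, ha, extC_smul, mul_eq_zero]
  simp [a.ne_zero]

lemma normSq_Qv_of_mem_RP2 {v : Fin 3 → ℂ} (hv : v ≠ 0)
    (h : Projectivization.mk ℂ v hv ∈ RP2) : normSq (Qv v) = nv v ^ 2 := by
  obtain ⟨w, hw, hp⟩ := h
  rw [Projectivization.mk_eq_mk_iff] at hp
  obtain ⟨a, ha⟩ := hp
  set W : ℝ := w 0 ^ 2 + w 1 ^ 2 + w 2 ^ 2 with hW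
  have hQw : Qv (fun i => (w i : ℂ)) = (W : ℂ) := by
    simp only [Qv, dotc, hW]; push_cast; ring
  have hnw : nv (fun i => (w i : ℂ)) = W := by
    simp only [nv, hW, Complex.normSq_ofReal]; ring
  have hv' : v = (a : ℂ) • fun i => (w i : ℂ) := ha.symm
  rw [hv', Qv_smul, nv_smul, hQw, hnw]
  rw [Complex.normSq_mul]
  simp only [map_pow, Complex.normSq_ofReal]
  ring

end CLH
namespace CLH
open Complex (normSq)
local notation "conj'" => starRingEnd ℂ

lemma exists_conj_smul {v : Fin 3 → ℂ} (hv : v ≠ 0)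
    (h : normSq (Qv v) = nv v ^ 2) : ∃ r : ℂ, r ≠ 0 ∧ v = r • cj v := by
  classical
  set x : EuclideanSpace ℂ (Fin 3) := (WithLp.equiv 2 (Fin 3 → ℂ)).symm (cj v) with hx
  set y : EuclideanSpace ℂ (Fin 3) := (WithLp.equiv 2 (Fin 3 → ℂ)).symm v with hy
  have hxv : ∀ i, x i = conj' (v i) := fun i => rfl
  have hyv : ∀ i, y i = v i := fun i => rfl
  have hcj : cj v ≠ 0 := by
    intro hc
    apply hv
    funext i
    have := congrFun hc i
    simp only [cj, Pi.zero_apply] at this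
    simpa using congrArg conj' this
  have hx0 : x ≠ 0 := by
    intro h0
    apply hcj
    funext i
    exact congrFun (congrArg (WithLp.equiv 2 (Fin 3 → ℂ)) h0) i
  have hy0 : y ≠ 0 := by
    intro h0
    apply hv
    funext i
    exact congrFun (congrArg (WithLp.equiv 2 (Fin 3 → ℂ)) h0) i
  have hinner : (inner ℂ x y : ℂ) = Qv v := by
    simp only [PiLp.inner_apply, RCLike.inner_apply, Fin.sum_univ_three, hxv, hyv,
      Complex.conj_conj, Qv, dotc]
  have hny : ‖y‖ = Real.sqrt (nv v) := by
    rw [EuclideanSpace.norm_eq]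
    congr 1
    simp only [Fin.sum_univ_three, hyv, nv]
    simp [Complex.sq_norm]
  have hnx : ‖x‖ = Real.sqrt (nv v) := by
    rw [EuclideanSpace.norm_eq]
    congr 1
    simp only [Fin.sum_univ_three, hxv, nv]
    simp [Complex.sq_norm]
  have heq : ‖(inner ℂ x y : ℂ)‖ = ‖x‖ * ‖y‖ := by
    rw [hinner, hnx, hny, Real.mul_self_sqrt (nv_nonneg v)]
    rw [Complex.norm_def, h]
    exact Real.sqrt_sq (nv_nonneg v)
  obtain ⟨r, hr0, hry⟩ := (norm_inner_eq_norm_iff hx0 hy0).1 heq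
  refine ⟨r, hr0, ?_⟩
  funext i
  have := congrFun (congrArg (WithLp.equiv 2 (Fin 3 → ℂ)) hry) i
  simpa [hxv, hyv, cj] using this

lemma mem_RP2_of_eq {v : Fin 3 → ℂ} (hv : v ≠ 0)
    (h : normSq (Qv v) = nv v ^ 2) : Projectivization.mk ℂ v hv ∈ RP2 := by
  obtain ⟨r, hr0, hr⟩ := exists_conj_smul hv h
  have hvi : ∀ i, v i = r * conj' (v i) := fun i => congrFun hr i
  obtain ⟨j, hj⟩ := Function.ne_iff.1 hv
  have hj : v j ≠ 0 := hj
  have habs : (‖v j‖ : ℂ) ≠ 0 := by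
    simpa using (norm_ne_zero_iff.2 hj)
  set c : ℂ := v j / (‖v j‖ : ℂ) with hc_def
  have hc0 : c ≠ 0 := div_ne_zero hj habs
  have hcconj0 : conj' c ≠ 0 := by simpa using hc0
  have hcj0 : conj' (v j) ≠ 0 := by simpa using hj
  have hcc : c = conj' c * r := by
    have hj' := hvi j
    rw [hc_def]
    rw [map_div₀, Complex.conj_ofReal]
    linear_combination (1 / (‖v j‖ : ℂ)) * hj'
  have hureal : ∀ i, ((conj' c * v i).re : ℂ) = conj' c * v i := by
    intro i
    rw [← Complex.conj_eq_iff_re]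
    rw [map_mul, Complex.conj_conj]
    calc c * conj' (v i) = conj' c * r * conj' (v i) := by rw [← hcc]
      _ = conj' c * (r * conj' (v i)) := by ring
      _ = conj' c * v i := by rw [← hvi i]
  set w : Fin 3 → ℝ := fun i => (conj' c * v i).re with hw_def
  have hwv : (fun i => (w i : ℂ)) = conj' c • v := funext fun i => by
    show (((conj' c * v i).re : ℝ) : ℂ) = conj' c * v i
    exact hureal i
  have hw0 : (fun i => (w i : ℂ)) ≠ 0 := by
    rw [hwv]
    intro h0
    apply hv
    funext i
    have := congrFun h0 i
    simp only [Pi.smul_apply, smul_eq_mul, Pi.zero_apply] at this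
    rcases mul_eq_zero.1 this with h' | h'
    · exact absurd h' hcconj0
    · simpa using h'
  refine ⟨w, hw0, ?_⟩
  rw [Projectivization.mk_eq_mk_iff]
  refine ⟨Units.mk0 (conj' c)⁻¹ (inv_ne_zero hcconj0), ?_⟩
  rw [hwv]
  funext i
  simp only [Units.smul_def, Units.val_mk0, Pi.smul_apply, smul_eq_mul]
  field_simp

end CLH
namespace CLH
open Topology

abbrev Vnz : Type := {v : Fin 3 → ℂ // v ≠ 0}

def mkQ : Vnz → CP2 := fun x => Projectivization.mk ℂ x.1 x.2

lemma continuous_mkQ : Continuous mkQ := continuous_quotient_mk'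

lemma mkQ_surjective : Function.Surjective mkQ := fun p =>
  ⟨⟨p.rep, p.rep_nonzero⟩, Projectivization.mk_rep p⟩

lemma isQuotientMap_mkQ : IsQuotientMap mkQ := isQuotientMap_quotient_mk'

def sc (a : ℂˣ) : Vnz → Vnz := fun x => ⟨(a : ℂ) • x.1, smul_ne_zero a.ne_zero x.2⟩

lemma continuous_sc (a : ℂˣ) : Continuous (sc a) :=
  (continuous_subtype_val.const_smul (a : ℂ)).subtype_mk _

lemma isOpenMap_mkQ : IsOpenMap mkQ := by
  intro U hU
  rw [← isQuotientMap_mkQ.isOpen_preimage]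
  have : mkQ ⁻¹' (mkQ '' U) = ⋃ a : ℂˣ, sc a ⁻¹' U := by
    ext x
    simp only [Set.mem_preimage, Set.mem_image, Set.mem_iUnion]
    constructor
    · rintro ⟨u, hu, huv⟩
      obtain ⟨a, ha⟩ := (Projectivization.mk_eq_mk_iff ℂ _ _ u.2 x.2).1 huv
      refine ⟨a, ?_⟩
      have : sc a x = u := Subtype.ext ha
      rw [this]; exact hu
    · rintro ⟨a, ha⟩
      refine ⟨sc a x, ha, ?_⟩
      show Projectivization.mk ℂ ((a : ℂ) • x.1) _ = Projectivization.mk ℂ x.1 x.2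
      exact (Projectivization.mk_eq_mk_iff ℂ _ _ (sc a x).2 x.2).2 ⟨a, rfl⟩
  rw [this]
  exact isOpen_iUnion fun a => (continuous_sc a).isOpen_preimage U hU

def resMk (S : Set CP2) : {x : Vnz // mkQ x ∈ S} → ↥S := fun x => ⟨mkQ x.1, x.2⟩

lemma continuous_resMk (S : Set CP2) : Continuous (resMk S) :=
  (continuous_mkQ.comp continuous_subtype_val).subtype_mk _

lemma surjective_resMk (S : Set CP2) : Function.Surjective (resMk S) := by
  rintro ⟨p, hp⟩
  refine ⟨⟨⟨p.rep, p.rep_nonzero⟩, ?_⟩, ?_⟩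
  · show Projectivization.mk ℂ p.rep p.rep_nonzero ∈ S
    rw [Projectivization.mk_rep]; exact hp
  · exact Subtype.ext (Projectivization.mk_rep p)

lemma isOpenMap_resMk (S : Set CP2) : IsOpenMap (resMk S) := by
  intro U hU
  obtain ⟨V, hV, rfl⟩ := isOpen_induced_iff.1 hU
  have himg : resMk S '' (Subtype.val ⁻¹' V) = Subtype.val ⁻¹' (mkQ '' V) := by
    ext p
    simp only [Set.mem_image, Set.mem_preimage]
    constructor
    · rintro ⟨x, hx, rfl⟩
      exact ⟨x.1, hx, rfl⟩
    · rintro ⟨v, hv, hvp⟩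
      have hmem : mkQ v ∈ S := by rw [hvp]; exact p.2
      exact ⟨⟨v, hmem⟩, hv, Subtype.ext hvp⟩
  rw [himg]
  exact (isOpenMap_mkQ V hV).preimage continuous_subtype_val

lemma isQuotientMap_resMk (S : Set CP2) : IsQuotientMap (resMk S) :=
  (isOpenMap_resMk S).isQuotientMap (continuous_resMk S) (surjective_resMk S)

end CLH
namespace CLH
open Complex (normSq)
local notation "conj'" => starRingEnd ℂ

/-- map `ℝ² → open unit disc`, as a map `ℂ → ℂ`. -/
def tauC (w : ℂ) : ℂ := ((2 / (1 + Real.sqrt (1 + 4 * normSq w)) : ℝ) : ℂ) * w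

lemma sqrt_aux_pos (w : ℂ) : 1 ≤ Real.sqrt (1 + 4 * normSq w) := by
  have h := Real.sqrt_le_sqrt (show (1:ℝ) ≤ 1 + 4 * normSq w by
    nlinarith [Complex.normSq_nonneg w])
  rwa [Real.sqrt_one] at h

lemma sq_sqrt_aux (w : ℂ) : (Real.sqrt (1 + 4 * normSq w)) ^ 2 = 1 + 4 * normSq w :=
  Real.sq_sqrt (by nlinarith [Complex.normSq_nonneg w])

lemma normSq_tauC_lt (w : ℂ) : normSq (tauC w) < 1 := by
  have hS := sqrt_aux_pos w
  have hS2 := sq_sqrt_aux w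
  set S := Real.sqrt (1 + 4 * normSq w) with hS_def
  have h1S : (0:ℝ) < 1 + S := by linarith
  have h1S' : (1 + S : ℝ) ≠ 0 := ne_of_gt h1S
  have hns : normSq (tauC w) = 4 * normSq w / (1 + S) ^ 2 := by
    rw [tauC, ← hS_def, Complex.normSq_mul, Complex.normSq_ofReal]
    field_simp
    ring
  rw [hns, div_lt_one (by positivity)]
  nlinarith [Complex.normSq_nonneg w]

lemma tauC_eq (τ : ℂ) (h : normSq τ < 1) :
    tauC ((((1 - normSq τ)⁻¹ : ℝ) : ℂ) * τ) = τ := by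
  have h0 : (0:ℝ) < 1 - normSq τ := by linarith
  have hτ0 : (0:ℝ) ≤ normSq τ := Complex.normSq_nonneg τ
  set r : ℝ := (1 - normSq τ)⁻¹ with hr_def
  have hr0 : 0 < r := by rw [hr_def]; positivity
  have hnw : normSq (((r : ℝ) : ℂ) * τ) = r ^ 2 * normSq τ := by
    rw [Complex.normSq_mul, Complex.normSq_ofReal]; ring
  have hsq : 1 + 4 * normSq (((r : ℝ) : ℂ) * τ) = ((1 + normSq τ) * r) ^ 2 := by
    rw [hnw, hr_def]
    field_simp
    ring
  have hS : Real.sqrt (1 + 4 * normSq (((r : ℝ) : ℂ) * τ)) = (1 + normSq τ) * r := by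
    rw [hsq]
    exact Real.sqrt_sq (mul_pos (by linarith) hr0).le
  rw [tauC, hS]
  have h1 : 1 + (1 + normSq τ) * r = 2 * r := by
    rw [hr_def]; field_simp; ring
  rw [h1]
  have h2 : (2:ℝ) / (2 * r) = r⁻¹ := by field_simp
  rw [h2, ← mul_assoc, ← Complex.ofReal_mul, inv_mul_cancel₀ (ne_of_gt hr0)]
  simp

lemma tauC_recover (w : ℂ) :
    ((((1 - normSq (tauC w))⁻¹ : ℝ) : ℂ)) * tauC w = w := by
  have hS := sqrt_aux_pos w
  have hS2 := sq_sqrt_aux w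
  set S := Real.sqrt (1 + 4 * normSq w) with hS_def
  have h1S : (0:ℝ) < 1 + S := by linarith
  have h1S' : (1 + S : ℝ) ≠ 0 := ne_of_gt h1S
  have hns : normSq (tauC w) = (S - 1) / (S + 1) := by
    have h : normSq (tauC w) = 4 * normSq w / (1 + S) ^ 2 := by
      rw [tauC, ← hS_def, Complex.normSq_mul, Complex.normSq_ofReal]
      field_simp
      ring
    rw [h, div_eq_div_iff (by positivity) (by linarith)]
    nlinarith
  have h1n : 1 - normSq (tauC w) = 2 / (S + 1) := by
    rw [hns]; field_simp; ring
  rw [h1n, tauC, ← hS_def]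
  have h2 : ((2 / (S + 1))⁻¹ : ℝ) * (2 / (1 + S)) = 1 := by
    field_simp
    ring
  rw [← mul_assoc, ← Complex.ofReal_mul, h2]
  simp

end CLH
namespace CLH
open Complex (normSq)
local notation "conj'" => starRingEnd ℂ

lemma normSq_Qv_le (v : Fin 3 → ℂ) : normSq (Qv v) ≤ nv v ^ 2 := by
  classical
  set x : EuclideanSpace ℂ (Fin 3) := (WithLp.equiv 2 (Fin 3 → ℂ)).symm (cj v) with hx
  set y : EuclideanSpace ℂ (Fin 3) := (WithLp.equiv 2 (Fin 3 → ℂ)).symm v with hy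
  have hxv : ∀ i, x i = conj' (v i) := fun i => rfl
  have hyv : ∀ i, y i = v i := fun i => rfl
  have hinner : (inner ℂ x y : ℂ) = Qv v := by
    simp only [PiLp.inner_apply, RCLike.inner_apply, Fin.sum_univ_three, hxv, hyv,
      Complex.conj_conj, Qv, dotc]
  have hny : ‖y‖ = Real.sqrt (nv v) := by
    rw [EuclideanSpace.norm_eq]
    congr 1
    simp only [Fin.sum_univ_three, hyv, nv]
    simp [Complex.sq_norm]
  have hnx : ‖x‖ = Real.sqrt (nv v) := by
    rw [EuclideanSpace.norm_eq]
    congr 1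
    simp only [Fin.sum_univ_three, hxv, nv]
    simp [Complex.sq_norm]
  have h := norm_inner_le_norm (𝕜 := ℂ) x y
  rw [hinner, hnx, hny, Real.mul_self_sqrt (nv_nonneg v)] at h
  have h2 : normSq (Qv v) = ‖Qv v‖ ^ 2 := by
    rw [Complex.sq_norm]
  nlinarith [norm_nonneg (Qv v)]

variable {d : ℕ} (l : Fin d → ((Fin 3 → ℝ) →ₗ[ℝ] ℝ))

def Aset : Set CP2 := RP2 ∪ ⋃ i, cLine (l i)

def Bset : Set CP2 := conic \ (conic ∩ ⋃ i, cLine (l i))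

lemma mem_Asetc_iff {v : Fin 3 → ℂ} (hv : v ≠ 0) :
    Projectivization.mk ℂ v hv ∈ (Aset l)ᶜ
      ↔ normSq (Qv v) < nv v ^ 2 ∧ ∀ i, extC (l i) v ≠ 0 := by
  simp only [Aset, Set.mem_compl_iff, Set.mem_union, Set.mem_iUnion, not_or, not_exists]
  constructor
  · rintro ⟨h1, h2⟩
    refine ⟨lt_of_le_of_ne (normSq_Qv_le v) fun he => h1 (mem_RP2_of_eq hv he), fun i hE =>
      h2 i ((mem_cLine_iff hv (l i)).2 hE)⟩
  · rintro ⟨h1, h2⟩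
    exact ⟨fun hR => (ne_of_lt h1) (normSq_Qv_of_mem_RP2 hv hR),
      fun i hc => h2 i ((mem_cLine_iff hv (l i)).1 hc)⟩

lemma mem_Bset_iff {v : Fin 3 → ℂ} (hv : v ≠ 0) :
    Projectivization.mk ℂ v hv ∈ Bset l
      ↔ Qv v = 0 ∧ ∀ i, extC (l i) v ≠ 0 := by
  simp only [Bset, Set.mem_diff, Set.mem_inter_iff, Set.mem_iUnion, not_and, not_exists,
    mem_conic_iff hv]
  constructor
  · rintro ⟨h1, h2⟩
    exact ⟨h1, fun i hc => h2 h1 i ((mem_cLine_iff hv (l i)).2 hc)⟩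
  · rintro ⟨h1, h2⟩
    exact ⟨h1, fun _ i hc => h2 i ((mem_cLine_iff hv (l i)).1 hc)⟩

lemma extC_comb2 (l' : (Fin 3 → ℝ) →ₗ[ℝ] ℝ) (a b : ℂ) (x y : Fin 3 → ℂ) :
    extC l' (fun j => a * x j + b * y j) = a * extC l' x + b * extC l' y := by
  simp only [extC_eq3]; ring

lemma extC_scale (l' : (Fin 3 → ℝ) →ₗ[ℝ] ℝ) (c : ℂ) (x : Fin 3 → ℂ) :
    extC l' (fun j => c * x j) = c * extC l' x := by
  simp only [extC_eq3]; ring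

lemma extC_Zv_ne {v : Fin 3 → ℂ} (hv : v ≠ 0) (hlt : normSq (Qv v) < nv v ^ 2)
    (l' : (Fin 3 → ℝ) →ₗ[ℝ] ℝ) (hli : extC l' v ≠ 0) : extC l' (Zv v) ≠ 0 := by
  intro hE
  have hvec : (fun j => ((nv v + sv v : ℝ) : ℂ) * cj (Zv v) j + Qv v * Zv v j)
      = fun j => ((2 * sv v * (nv v + sv v) : ℝ) : ℂ) * v j := funext (comb_Zv hlt.le)
  have h2 := congrArg (extC l') hvec
  rw [extC_comb2, extC_scale, extC_cj, hE, map_zero] at h2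
  simp only [mul_zero, add_zero] at h2
  have hs := sv_pos hlt
  have hn := nv_pos hv
  have hcoef : ((2 * sv v * (nv v + sv v) : ℝ) : ℂ) ≠ 0 := by
    have : (0:ℝ) < 2 * sv v * (nv v + sv v) := by positivity
    exact_mod_cast ne_of_gt this
  exact hli (by
    rcases mul_eq_zero.1 h2.symm with h | h
    · exact absurd h hcoef
    · exact h)

end CLH
namespace CLH
open Complex (normSq)
local notation "conj'" => starRingEnd ℂ

def Gv (z : Fin 3 → ℂ) (t : ℂ) : Fin 3 → ℂ := fun i => conj' (z i) + t * z i

variable {z : Fin 3 → ℂ} {t : ℂ}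

lemma dotc_z_Gv (hQz : Qv z = 0) : dotc z (Gv z t) = ((nv z : ℝ) : ℂ) := by
  have h1 := hnC z
  simp only [Qv, dotc, Gv] at *
  linear_combination t * hQz - h1

lemma Gv_ne (hz : z ≠ 0) (hQz : Qv z = 0) : Gv z t ≠ 0 := by
  intro h0
  have h := dotc_z_Gv (t := t) hQz
  rw [h0] at h
  have h2 : (nv z : ℂ) = 0 := by rw [← h]; simp [dotc]
  have h3 := nv_pos hz
  have h4 : nv z = 0 := by exact_mod_cast h2
  linarith

lemma Qv_Gv (hQz : Qv z = 0) : Qv (Gv z t) = 2 * t * ((nv z : ℝ) : ℂ) := by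
  have h1 := hnC z
  have hqc : conj' (Qv z) = 0 := by rw [hQz]; exact map_zero _
  simp only [Qv, dotc, Gv, map_add, map_mul] at *
  linear_combination hqc + t ^ 2 * hQz - 2 * t * h1

lemma nv_Gv (hQz : Qv z = 0) : nv (Gv z t) = (1 + normSq t) * nv z := by
  have hC : ((nv (Gv z t) : ℝ) : ℂ) = (((1 + normSq t) * nv z : ℝ) : ℂ) := by
    rw [← dotc_self_cj (Gv z t)]
    have h1 := hnC z
    have hqc : conj' (Qv z) = 0 := by rw [hQz]; exact map_zero _
    have htc : ((normSq t : ℝ) : ℂ) = t * conj' t := (Complex.mul_conj t).symm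
    simp only [Qv, dotc, Gv, cj, map_add, map_mul, Complex.conj_conj] at *
    push_cast at *
    linear_combination conj' t * hqc + t * hQz - (1 + t * conj' t) * h1
      - ((nv z : ℝ) : ℂ) * htc
  exact_mod_cast hC

lemma sv_Gv (hQz : Qv z = 0) (ht : normSq t < 1) :
    sv (Gv z t) = (1 - normSq t) * nv z := by
  unfold sv
  rw [Qv_Gv hQz, nv_Gv hQz]
  have h2 : normSq (2 * t * ((nv z : ℝ) : ℂ)) = 4 * normSq t * nv z ^ 2 := by
    have h4 : (2 * t * ((nv z : ℝ) : ℂ)) = ((2:ℝ):ℂ) * t * ((nv z : ℝ) : ℂ) := by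
      norm_num
    rw [h4, Complex.normSq_mul, Complex.normSq_mul, Complex.normSq_ofReal,
      Complex.normSq_ofReal]
    ring
  rw [h2]
  have hm := nv_nonneg z
  have h3 : ((1 + normSq t) * nv z) ^ 2 - 4 * normSq t * nv z ^ 2
      = ((1 - normSq t) * nv z) ^ 2 := by ring
  rw [h3, Real.sqrt_sq (mul_nonneg (by linarith) hm)]

lemma Zv_Gv (hQz : Qv z = 0) (ht : normSq t < 1) :
    Zv (Gv z t) = fun i => ((2 * (1 - normSq t) * nv z : ℝ) : ℂ) * z i := by
  funext i
  have htc : ((normSq t : ℝ) : ℂ) = t * conj' t := (Complex.mul_conj t).symm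
  simp only [Zv, Qv_Gv hQz, nv_Gv hQz, sv_Gv hQz ht, Gv, map_add, map_mul,
    Complex.conj_conj, Complex.conj_ofReal, map_ofNat]
  push_cast
  linear_combination (2 * ((nv z : ℝ) : ℂ) * z i) * htc

end CLH
namespace CLH
open Complex (normSq)
local notation "conj'" => starRingEnd ℂ

variable {d : ℕ}

def Av (l0 : (Fin 3 → ℝ) →ₗ[ℝ] ℝ) (v : Fin 3 → ℂ) : ℂ := extC l0 (Zv v)

def wv (l0 : (Fin 3 → ℝ) →ₗ[ℝ] ℝ) (v : Fin 3 → ℂ) : ℂ :=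
  Qv v * Av l0 v / (2 * ((sv v : ℝ) : ℂ) * conj' (Av l0 v))

def tg (l0 : (Fin 3 → ℝ) →ₗ[ℝ] ℝ) (z : Fin 3 → ℂ) (w : ℂ) : ℂ :=
  tauC w * conj' (extC l0 z) / extC l0 z

lemma normSq_tg (l0 : (Fin 3 → ℝ) →ₗ[ℝ] ℝ) {z : Fin 3 → ℂ}
    (ha : extC l0 z ≠ 0) (w : ℂ) : normSq (tg l0 z w) = normSq (tauC w) := by
  unfold tg
  rw [Complex.normSq_div, Complex.normSq_mul, Complex.normSq_conj, mul_div_assoc,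
    div_self (fun h => ha (Complex.normSq_eq_zero.1 h)), mul_one]

lemma normSq_tg_lt (l0 : (Fin 3 → ℝ) →ₗ[ℝ] ℝ) {z : Fin 3 → ℂ}
    (ha : extC l0 z ≠ 0) (w : ℂ) : normSq (tg l0 z w) < 1 := by
  rw [normSq_tg l0 ha w]; exact normSq_tauC_lt w

lemma extC_Gv (l' : (Fin 3 → ℝ) →ₗ[ℝ] ℝ) (z : Fin 3 → ℂ) (t : ℂ) :
    extC l' (Gv z t) = conj' (extC l' z) + t * extC l' z := by
  simp only [Gv, extC_eq3, map_add, map_mul, Complex.conj_ofReal]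
  ring

variable (l : Fin d → ((Fin 3 → ℝ) →ₗ[ℝ] ℝ))

lemma mkZ_mem_Bset {v : Fin 3 → ℂ} (hv : v ≠ 0) (hlt : normSq (Qv v) < nv v ^ 2)
    (hli : ∀ i, extC (l i) v ≠ 0) :
    Projectivization.mk ℂ (Zv v) (Zv_ne_zero hv hlt) ∈ Bset l := by
  rw [mem_Bset_iff]
  exact ⟨dotc_Zv_Zv hlt.le, fun i => extC_Zv_ne hv hlt (l i) (hli i)⟩

lemma normSq_2tm (t : ℂ) (m : ℝ) : normSq (2 * t * ((m : ℝ) : ℂ)) = 4 * normSq t * m ^ 2 := by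
  have h4 : (2 * t * ((m : ℝ) : ℂ)) = ((2:ℝ):ℂ) * t * ((m : ℝ) : ℂ) := by norm_num
  rw [h4, Complex.normSq_mul, Complex.normSq_mul, Complex.normSq_ofReal,
    Complex.normSq_ofReal]
  ring

lemma mkG_mem_Asetc {z : Fin 3 → ℂ} {t : ℂ} (hz : z ≠ 0) (hQz : Qv z = 0)
    (hlz : ∀ i, extC (l i) z ≠ 0) (ht : normSq t < 1) :
    Projectivization.mk ℂ (Gv z t) (Gv_ne hz hQz) ∈ (Aset l)ᶜ := by
  rw [mem_Asetc_iff]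
  constructor
  · rw [Qv_Gv hQz, nv_Gv hQz, normSq_2tm]
    have h1 := mul_pos (sub_pos.2 ht) (nv_pos hz)
    nlinarith [mul_pos h1 h1]
  · intro i hE
    rw [extC_Gv] at hE
    have h2 : conj' (extC (l i) z) = -(t * extC (l i) z) :=
      add_eq_zero_iff_eq_neg.1 hE
    have h3 := congrArg normSq h2
    rw [Complex.normSq_conj, Complex.normSq_neg, Complex.normSq_mul] at h3
    have hna : 0 < normSq (extC (l i) z) := Complex.normSq_pos.2 (hlz i)
    nlinarith

end CLH
namespace CLH
open Complex (normSq)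
local notation "conj'" => starRingEnd ℂ

-- F ∘ G identity, second component
lemma wv_Gv (l0 : (Fin 3 → ℝ) →ₗ[ℝ] ℝ) {z : Fin 3 → ℂ} (hz : z ≠ 0)
    (hQz : Qv z = 0) (ha : extC l0 z ≠ 0) (w : ℂ) :
    wv l0 (Gv z (tg l0 z w)) = w := by
  set a := extC l0 z with ha_def
  have hca : conj' a ≠ 0 := by simpa using ha
  set t := tg l0 z w with ht_def
  have htν : normSq t = normSq (tauC w) := normSq_tg l0 ha w
  have ht : normSq t < 1 := normSq_tg_lt l0 ha w
  have hm : 0 < nv z := nv_pos hz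
  have hmC : ((nv z : ℝ) : ℂ) ≠ 0 := by exact_mod_cast ne_of_gt hm
  have hν : normSq (tauC w) < 1 := normSq_tauC_lt w
  have hν0 : (1 - normSq (tauC w) : ℝ) ≠ 0 := by linarith
  have hAv : Av l0 (Gv z t) = ((2 * (1 - normSq t) * nv z : ℝ) : ℂ) * a := by
    rw [Av, Zv_Gv hQz ht, extC_scale]
  have hr0 : (2 * (1 - normSq t) * nv z : ℝ) ≠ 0 := by
    have h5 : (0:ℝ) < 2 * (1 - normSq t) * nv z := by
      have := sub_pos.2 ht; positivity
    exact ne_of_gt h5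
  have hrC : ((2 * (1 - normSq t) * nv z : ℝ) : ℂ) ≠ 0 := by exact_mod_cast hr0
  have hν0C : ((1 - normSq (tauC w) : ℝ) : ℂ) ≠ 0 := Complex.ofReal_ne_zero.2 hν0
  rw [wv, hAv, Qv_Gv hQz, sv_Gv hQz ht, map_mul, Complex.conj_ofReal, htν, ht_def, tg,
    ← ha_def]
  have h' : ((1 - normSq (tauC w) : ℝ) : ℂ)⁻¹ * tauC w = w := by
    rw [← Complex.ofReal_inv]; exact tauC_recover w
  set ν := normSq (tauC w) with hν_def
  set τ := tauC w with hτ_def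
  have hrec : τ = ((1 - ν : ℝ) : ℂ) * w := by
    calc τ = ((1 - ν : ℝ) : ℂ) * (((1 - ν : ℝ) : ℂ)⁻¹ * τ) := by
          rw [← mul_assoc, mul_inv_cancel₀ hν0C, one_mul]
      _ = ((1 - ν : ℝ) : ℂ) * w := by rw [h']
  have hD : (2 * (((1 - ν) * nv z : ℝ) : ℂ) * ((((2 * (1 - ν) * nv z : ℝ)) : ℂ) * conj' a)) ≠ 0 := by
    have e1 : ((1 - ν) * nv z : ℝ) ≠ 0 := mul_ne_zero hν0 (ne_of_gt hm)
    have e2 : (2 * (1 - ν) * nv z : ℝ) ≠ 0 :=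
      mul_ne_zero (mul_ne_zero two_ne_zero hν0) (ne_of_gt hm)
    exact mul_ne_zero (mul_ne_zero two_ne_zero (Complex.ofReal_ne_zero.2 e1))
      (mul_ne_zero (Complex.ofReal_ne_zero.2 e2) hca)
  rw [hrec, div_eq_iff hD]
  field_simp
  push_cast
  ring

-- G ∘ F identity, main vector computation
lemma Gv_of_F (l0 : (Fin 3 → ℝ) →ₗ[ℝ] ℝ) {v : Fin 3 → ℂ} (hv : v ≠ 0)
    (hlt : normSq (Qv v) < nv v ^ 2) (hA : extC l0 (Zv v) ≠ 0) {c : ℂ} (hc : c ≠ 0) :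
    Gv (c • Zv v) (tg l0 (c • Zv v) (wv l0 v))
      = fun i => (conj' c * ((2 * sv v : ℝ) : ℂ)) * v i := by
  set A := extC l0 (Zv v) with hA_def
  have hcA : conj' A ≠ 0 := by simpa using hA
  have hs := sv_pos hlt
  have hn := nv_pos hv
  have hκ : (0:ℝ) < nv v + sv v := by linarith
  have hκC : ((nv v + sv v : ℝ) : ℂ) ≠ 0 := by exact_mod_cast ne_of_gt hκ
  have hsC : ((sv v : ℝ) : ℂ) ≠ 0 := by exact_mod_cast ne_of_gt hs
  have hQn : normSq (Qv v) = nv v ^ 2 - sv v ^ 2 := by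
    have := sq_sv hlt.le; linarith
  have hnA : normSq A ≠ 0 := fun h => hA (Complex.normSq_eq_zero.1 h)
  set τ₀ : ℂ := Qv v * A / (((nv v + sv v : ℝ) : ℂ) * conj' A) with hτ₀_def
  have hnτ : normSq τ₀ = (nv v - sv v) / (nv v + sv v) := by
    rw [hτ₀_def, Complex.normSq_div, Complex.normSq_mul, Complex.normSq_mul,
      Complex.normSq_conj, Complex.normSq_ofReal, hQn]
    field_simp
    ring
  have hτlt : normSq τ₀ < 1 := by
    rw [hnτ, div_lt_one hκ]; linarith
  have h1τ : ((1 - normSq τ₀)⁻¹ : ℝ) = (nv v + sv v) / (2 * sv v) := by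
    rw [hnτ]
    have h2 : 1 - (nv v - sv v) / (nv v + sv v) = 2 * sv v / (nv v + sv v) := by
      field_simp; ring
    rw [h2, inv_div]
  have h2s : (2 * sv v : ℝ) ≠ 0 := by positivity
  have hw : wv l0 v = (((1 - normSq τ₀)⁻¹ : ℝ) : ℂ) * τ₀ := by
    rw [h1τ, hτ₀_def, wv, Av, ← hA_def, Complex.ofReal_div, div_mul_div_comm,
      div_eq_div_iff (mul_ne_zero (mul_ne_zero two_ne_zero hsC) hcA)
        (mul_ne_zero (Complex.ofReal_ne_zero.2 h2s) (mul_ne_zero hκC hcA))]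
    push_cast
    ring
  have htau : tauC (wv l0 v) = τ₀ := by rw [hw]; exact tauC_eq τ₀ hτlt
  have hEz : extC l0 (c • Zv v) = c * A := extC_smul l0 c (Zv v)
  have hτκ : τ₀ * ((nv v + sv v : ℝ) : ℂ) * conj' A = Qv v * A := by
    rw [hτ₀_def, div_mul_eq_mul_div, div_mul_eq_mul_div,
      div_eq_iff (mul_ne_zero hκC hcA)]
    ring
  have hstep4 : tg l0 (c • Zv v) (wv l0 v) * c * ((nv v + sv v : ℝ) : ℂ)
      = Qv v * conj' c := by
    rw [tg, htau, hEz, map_mul, div_mul_eq_mul_div, div_mul_eq_mul_div,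
      div_eq_iff (mul_ne_zero hc hA)]
    linear_combination (conj' c * c) * hτκ
  funext i
  simp only [Gv, Pi.smul_apply, smul_eq_mul, map_mul]
  have comb := comb_Zv hlt.le i
  simp only [cj] at comb
  refine mul_left_cancel₀ hκC ?_
  push_cast at comb hstep4 ⊢
  linear_combination conj' c * comb + Zv v i * hstep4

end CLH
namespace CLH
open Complex (normSq)
local notation "conj'" => starRingEnd ℂ

lemma mk_congr {X Y : Fin 3 → ℂ} (h : X = Y) (hX : X ≠ 0) (hY : Y ≠ 0) :
    Projectivization.mk ℂ X hX = Projectivization.mk ℂ Y hY := by subst h; rfl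

lemma mk_unit_smul {u : Fin 3 → ℂ} (hu : u ≠ 0) {a : ℂ} (ha : a ≠ 0) (h2 : a • u ≠ 0) :
    Projectivization.mk ℂ (a • u) h2 = Projectivization.mk ℂ u hu :=
  (Projectivization.mk_eq_mk_iff ℂ _ _ h2 hu).2 ⟨Units.mk0 a ha, rfl⟩

variable {d : ℕ} (l : Fin d → ((Fin 3 → ℝ) →ₗ[ℝ] ℝ)) (i0 : Fin d)

lemma Asetc_rep {p : CP2} (hp : p ∈ (Aset l)ᶜ) :
    normSq (Qv p.rep) < nv p.rep ^ 2 ∧ ∀ i, extC (l i) p.rep ≠ 0 :=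
  (mem_Asetc_iff l p.rep_nonzero).1 (by rwa [Projectivization.mk_rep])

lemma Bset_rep {p : CP2} (hp : p ∈ Bset l) :
    Qv p.rep = 0 ∧ ∀ i, extC (l i) p.rep ≠ 0 :=
  (mem_Bset_iff l p.rep_nonzero).1 (by rwa [Projectivization.mk_rep])

lemma Fmem (p : ↥((Aset l)ᶜ)) :
    Projectivization.mk ℂ (Zv p.1.rep)
      (Zv_ne_zero p.1.rep_nonzero (Asetc_rep l p.2).1) ∈ Bset l :=
  mkZ_mem_Bset l p.1.rep_nonzero (Asetc_rep l p.2).1 (Asetc_rep l p.2).2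

noncomputable def Fmap (p : ↥((Aset l)ᶜ)) : ↥(Bset l) × (ℝ × ℝ) :=
  (⟨_, Fmem l p⟩, Complex.equivRealProdCLM (wv (l i0) p.1.rep))

lemma Gmem (q : ↥(Bset l) × (ℝ × ℝ)) :
    Projectivization.mk ℂ
      (Gv q.1.1.rep (tg (l i0) q.1.1.rep (Complex.equivRealProdCLM.symm q.2)))
      (Gv_ne q.1.1.rep_nonzero (Bset_rep l q.1.2).1) ∈ (Aset l)ᶜ :=
  mkG_mem_Asetc l q.1.1.rep_nonzero (Bset_rep l q.1.2).1 (Bset_rep l q.1.2).2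
    (normSq_tg_lt (l i0) ((Bset_rep l q.1.2).2 i0) _)

noncomputable def Gmap (q : ↥(Bset l) × (ℝ × ℝ)) : ↥((Aset l)ᶜ) :=
  ⟨_, Gmem l i0 q⟩

lemma GF_id (p : ↥((Aset l)ᶜ)) : Gmap l i0 (Fmap l i0 p) = p := by
  obtain ⟨hlt, hli⟩ := Asetc_rep l p.2
  set v := p.1.rep with hv_def
  have hv : v ≠ 0 := p.1.rep_nonzero
  have hA : extC (l i0) (Zv v) ≠ 0 := extC_Zv_ne hv hlt (l i0) (hli i0)
  have hs := sv_pos hlt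
  apply Subtype.ext
  obtain ⟨c, hc⟩ := rep_mk (Zv_ne_zero hv hlt)
  have hw : Complex.equivRealProdCLM.symm (Complex.equivRealProdCLM (wv (l i0) v))
      = wv (l i0) v := ContinuousLinearEquiv.symm_apply_apply _ _
  have hne : (conj' (c : ℂ) * ((2 * sv v : ℝ) : ℂ)) ≠ 0 := by
    apply mul_ne_zero
    · simpa using c.ne_zero
    · exact_mod_cast ne_of_gt (by positivity : (0:ℝ) < 2 * sv v)
  have h2 : (conj' (c : ℂ) * ((2 * sv v : ℝ) : ℂ)) • v ≠ 0 := smul_ne_zero hne hv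
  have hvec : Gv ((Fmap l i0 p).1.1.rep)
      (tg (l i0) ((Fmap l i0 p).1.1.rep) (Complex.equivRealProdCLM.symm (Fmap l i0 p).2))
      = (conj' (c : ℂ) * ((2 * sv v : ℝ) : ℂ)) • v := by
    have h1 : (Fmap l i0 p).1.1 = Projectivization.mk ℂ (Zv v) (Zv_ne_zero hv hlt) := rfl
    have h2' : (Fmap l i0 p).2 = Complex.equivRealProdCLM (wv (l i0) v) := rfl
    rw [h1, h2', hw, hc]
    exact Gv_of_F (l i0) hv hlt hA c.ne_zero
  refine (mk_congr hvec _ h2).trans ((mk_unit_smul hv hne h2).trans ?_)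
  exact Projectivization.mk_rep p.1

lemma Av_smul (l0 : (Fin 3 → ℝ) →ₗ[ℝ] ℝ) (a : ℂ) (u : Fin 3 → ℂ) :
    Av l0 (a • u) = ((normSq a : ℂ) * conj' a) * Av l0 u := by
  rw [Av, Zv_smul, extC_smul, Av]

lemma wv_smul (l0 : (Fin 3 → ℝ) →ₗ[ℝ] ℝ) {a : ℂ} (ha : a ≠ 0) {u : Fin 3 → ℂ}
    (hsu : sv u ≠ 0) (hAu : Av l0 u ≠ 0) : wv l0 (a • u) = wv l0 u := by
  have hna : ((normSq a : ℝ) : ℂ) = a * conj' a := (Complex.mul_conj a).symm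
  have hcAu : conj' (Av l0 u) ≠ 0 := by simpa using hAu
  have hca : conj' a ≠ 0 := by simpa using ha
  have hn0 : (normSq a : ℝ) ≠ 0 := (Complex.normSq_pos.2 ha).ne'
  have hn0C : ((normSq a : ℝ) : ℂ) ≠ 0 := Complex.ofReal_ne_zero.2 hn0
  have hsuC : ((sv u : ℝ) : ℂ) ≠ 0 := Complex.ofReal_ne_zero.2 hsu
  rw [wv, wv, Qv_smul, sv_smul, Av_smul]
  simp only [map_mul, Complex.conj_conj, Complex.conj_ofReal]
  push_cast
  field_simp
  linear_combination (-Qv u) * hna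

lemma FG_id (q : ↥(Bset l) × (ℝ × ℝ)) : Fmap l i0 (Gmap l i0 q) = q := by
  obtain ⟨⟨ζ, hB⟩, x⟩ := q
  obtain ⟨hQz, hlz⟩ := Bset_rep l hB
  set z := ζ.rep with hz_def
  have hz : z ≠ 0 := ζ.rep_nonzero
  set w : ℂ := Complex.equivRealProdCLM.symm x with hw_def
  set t : ℂ := tg (l i0) z w with ht_def
  have ht : normSq t < 1 := normSq_tg_lt (l i0) (hlz i0) w
  have hGne : Gv z t ≠ 0 := Gv_ne hz hQz
  have hm := nv_pos hz
  have h1t : (0:ℝ) < 1 - normSq t := by linarith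
  have hsG : sv (Gv z t) ≠ 0 := by
    rw [sv_Gv hQz ht]; positivity
  have hr0 : ((2 * (1 - normSq t) * nv z : ℝ)) ≠ 0 := by positivity
  have hrC : ((2 * (1 - normSq t) * nv z : ℝ) : ℂ) ≠ 0 := Complex.ofReal_ne_zero.2 hr0
  have hAG : Av (l i0) (Gv z t) ≠ 0 := by
    rw [Av, Zv_Gv hQz ht, extC_scale]
    exact mul_ne_zero hrC (hlz i0)
  obtain ⟨c, hc⟩ := rep_mk hGne
  have hK : ((normSq (c:ℂ) : ℂ) * conj' (c:ℂ)) * ((2 * (1 - normSq t) * nv z : ℝ) : ℂ) ≠ 0 := by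
    refine mul_ne_zero (mul_ne_zero ?_ ?_) hrC
    · exact_mod_cast (Complex.normSq_pos.2 c.ne_zero).ne'
    · simpa using c.ne_zero
  have hvec : Zv ((Gmap l i0 (⟨ζ, hB⟩, x)).1.rep)
      = (((normSq (c:ℂ) : ℂ) * conj' (c:ℂ)) * ((2 * (1 - normSq t) * nv z : ℝ) : ℂ)) • z := by
    have h1 : (Gmap l i0 (⟨ζ, hB⟩, x)).1 = Projectivization.mk ℂ (Gv z t) hGne := rfl
    rw [h1, hc, Zv_smul, Zv_Gv hQz ht]
    funext i
    simp only [Pi.smul_apply, smul_eq_mul]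
    ring
  have hKz : (((normSq (c:ℂ) : ℂ) * conj' (c:ℂ)) * ((2 * (1 - normSq t) * nv z : ℝ) : ℂ)) • z ≠ 0 :=
    smul_ne_zero hK hz
  refine Prod.ext ?_ ?_
  · apply Subtype.ext
    show Projectivization.mk ℂ _ _ = ζ
    refine (mk_congr hvec _ hKz).trans ((mk_unit_smul hz hK hKz).trans ?_)
    exact Projectivization.mk_rep ζ
  · show Complex.equivRealProdCLM (wv (l i0) ((Gmap l i0 (⟨ζ, hB⟩, x)).1.rep)) = x
    have h1 : (Gmap l i0 (⟨ζ, hB⟩, x)).1 = Projectivization.mk ℂ (Gv z t) hGne := rfl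
    rw [h1, hc, wv_smul (l i0) c.ne_zero hsG hAG, ht_def, wv_Gv (l i0) hz hQz (hlz i0) w,
      hw_def]
    exact Complex.equivRealProdCLM.apply_symm_apply x

end CLH
namespace CLH
open Complex (normSq)
open Topology
local notation "conj'" => starRingEnd ℂ

lemma continuous_Qv : Continuous Qv := by
  unfold Qv dotc
  fun_prop

lemma continuous_nv : Continuous nv := by
  unfold nv
  exact ((Complex.continuous_normSq.comp (continuous_apply 0)).add
    (Complex.continuous_normSq.comp (continuous_apply 1))).add
    (Complex.continuous_normSq.comp (continuous_apply 2))

lemma continuous_sv : Continuous sv := by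
  unfold sv
  exact Real.continuous_sqrt.comp
    ((continuous_nv.pow 2).sub (Complex.continuous_normSq.comp continuous_Qv))

lemma continuous_Zv : Continuous Zv := by
  unfold Zv
  refine continuous_pi fun i => ?_
  refine (((Complex.continuous_conj.comp continuous_Qv).neg).mul (continuous_apply i)).add
    (((Complex.continuous_ofReal.comp (continuous_nv.add continuous_sv))).mul
      (Complex.continuous_conj.comp (continuous_apply i)))

lemma continuous_extC (l' : (Fin 3 → ℝ) →ₗ[ℝ] ℝ) : Continuous (extC l') := by
  have h : extC l' = fun v => (l' (Pi.single 0 1) : ℂ) * v 0 + (l' (Pi.single 1 1) : ℂ) * v 1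
      + (l' (Pi.single 2 1) : ℂ) * v 2 := funext (extC_eq3 l')
  rw [h]
  fun_prop

lemma continuous_Av (l0 : (Fin 3 → ℝ) →ₗ[ℝ] ℝ) : Continuous (Av l0) :=
  (continuous_extC l0).comp continuous_Zv

lemma continuous_tauC : Continuous tauC := by
  unfold tauC
  refine Continuous.mul (Complex.continuous_ofReal.comp ?_) continuous_id
  refine Continuous.div continuous_const
    (continuous_const.add (Real.continuous_sqrt.comp
      (continuous_const.add (continuous_const.mul Complex.continuous_normSq)))) ?_
  intro x h
  have := sqrt_aux_pos x
  linarith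

variable {d : ℕ} (l : Fin d → ((Fin 3 → ℝ) →ₗ[ℝ] ℝ)) (i0 : Fin d)

lemma Fmap_mk {v : Fin 3 → ℂ} (hv : v ≠ 0) (h : Projectivization.mk ℂ v hv ∈ (Aset l)ᶜ) :
    Fmap l i0 ⟨Projectivization.mk ℂ v hv, h⟩
      = (⟨Projectivization.mk ℂ (Zv v) (Zv_ne_zero hv ((mem_Asetc_iff l hv).1 h).1),
          mkZ_mem_Bset l hv ((mem_Asetc_iff l hv).1 h).1 ((mem_Asetc_iff l hv).1 h).2⟩,
        Complex.equivRealProdCLM (wv (l i0) v)) := by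
  obtain ⟨hlt, hli⟩ := (mem_Asetc_iff l hv).1 h
  obtain ⟨a, ha⟩ := rep_mk hv
  have hZa : Zv ((Projectivization.mk ℂ v hv).rep)
      = ((normSq (a:ℂ) : ℂ) * conj' (a:ℂ)) • Zv v := by rw [ha, Zv_smul]
  have hK : ((normSq (a:ℂ) : ℂ) * conj' (a:ℂ)) ≠ 0 := by
    refine mul_ne_zero ?_ ?_
    · exact_mod_cast (Complex.normSq_pos.2 a.ne_zero).ne'
    · simpa using a.ne_zero
  have hKz : ((normSq (a:ℂ) : ℂ) * conj' (a:ℂ)) • Zv v ≠ 0 :=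
    smul_ne_zero hK (Zv_ne_zero hv hlt)
  refine Prod.ext ?_ ?_
  · apply Subtype.ext
    show Projectivization.mk ℂ _ _ = _
    exact (mk_congr hZa _ hKz).trans (mk_unit_smul (Zv_ne_zero hv hlt) hK hKz)
  · show Complex.equivRealProdCLM (wv (l i0) ((Projectivization.mk ℂ v hv).rep)) = _
    have hsv : sv v ≠ 0 := (sv_pos hlt).ne'
    have hAv : Av (l i0) v ≠ 0 := extC_Zv_ne hv hlt (l i0) (hli i0)
    rw [ha, wv_smul (l i0) a.ne_zero hsv hAv]

lemma continuous_Fmap : Continuous (Fmap l i0) := by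
  rw [(isQuotientMap_resMk ((Aset l)ᶜ)).continuous_iff]
  have hcomp : (Fmap l i0 ∘ resMk ((Aset l)ᶜ))
      = fun x : {x : Vnz // mkQ x ∈ (Aset l)ᶜ} =>
        ((⟨Projectivization.mk ℂ (Zv x.1.1)
            (Zv_ne_zero x.1.2 ((mem_Asetc_iff l x.1.2).1 x.2).1),
          mkZ_mem_Bset l x.1.2 ((mem_Asetc_iff l x.1.2).1 x.2).1
            ((mem_Asetc_iff l x.1.2).1 x.2).2⟩ : ↥(Bset l)),
         Complex.equivRealProdCLM (wv (l i0) x.1.1)) := by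
    funext x
    exact Fmap_mk l i0 x.1.2 x.2
  rw [hcomp]
  have hval : Continuous fun x : {x : Vnz // mkQ x ∈ (Aset l)ᶜ} => (x.1.1 : Fin 3 → ℂ) :=
    continuous_subtype_val.comp continuous_subtype_val
  refine Continuous.prodMk ?_ ?_
  · refine Continuous.subtype_mk ?_ _
    have : Continuous fun x : {x : Vnz // mkQ x ∈ (Aset l)ᶜ} =>
        mkQ ⟨Zv x.1.1, Zv_ne_zero x.1.2 ((mem_Asetc_iff l x.1.2).1 x.2).1⟩ :=
      continuous_mkQ.comp ((continuous_Zv.comp hval).subtype_mk _)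
    exact this
  · refine Complex.equivRealProdCLM.continuous.comp ?_
    unfold wv
    refine Continuous.div ?_ ?_ ?_
    · exact ((continuous_Qv.comp hval).mul ((continuous_Av (l i0)).comp hval))
    · exact (continuous_const.mul (Complex.continuous_ofReal.comp
        (continuous_sv.comp hval))).mul
        (Complex.continuous_conj.comp ((continuous_Av (l i0)).comp hval))
    · intro x
      obtain ⟨hlt, hli⟩ := (mem_Asetc_iff l x.1.2).1 x.2
      have hs := sv_pos hlt
      have hAv : Av (l i0) x.1.1 ≠ 0 := extC_Zv_ne x.1.2 hlt (l i0) (hli i0)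
      refine mul_ne_zero (mul_ne_zero two_ne_zero ?_) (by simpa using hAv)
      exact_mod_cast ne_of_gt hs

end CLH
namespace CLH
open Complex (normSq)
open Topology
local notation "conj'" => starRingEnd ℂ

lemma Gv_tg_smul (l0 : (Fin 3 → ℝ) →ₗ[ℝ] ℝ) {z : Fin 3 → ℂ} (hE : extC l0 z ≠ 0)
    {a : ℂ} (ha : a ≠ 0) (w : ℂ) :
    Gv (a • z) (tg l0 (a • z) w) = conj' a • Gv z (tg l0 z w) := by
  funext i
  simp only [Gv, tg, extC_smul, Pi.smul_apply, smul_eq_mul, map_mul]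
  field_simp

variable {d : ℕ} (l : Fin d → ((Fin 3 → ℝ) →ₗ[ℝ] ℝ)) (i0 : Fin d)

lemma Gmap_mk {z : Fin 3 → ℂ} (hz : z ≠ 0) (h : Projectivization.mk ℂ z hz ∈ Bset l)
    (x : ℝ × ℝ) :
    Gmap l i0 (⟨Projectivization.mk ℂ z hz, h⟩, x)
      = ⟨Projectivization.mk ℂ (Gv z (tg (l i0) z (Complex.equivRealProdCLM.symm x)))
          (Gv_ne hz ((mem_Bset_iff l hz).1 h).1),
        mkG_mem_Asetc l hz ((mem_Bset_iff l hz).1 h).1 ((mem_Bset_iff l hz).1 h).2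
          (normSq_tg_lt (l i0) (((mem_Bset_iff l hz).1 h).2 i0) _)⟩ := by
  obtain ⟨hQz, hlz⟩ := (mem_Bset_iff l hz).1 h
  obtain ⟨a, ha⟩ := rep_mk hz
  have hca : conj' (a : ℂ) ≠ 0 := by simpa using a.ne_zero
  have hGne : Gv z (tg (l i0) z (Complex.equivRealProdCLM.symm x)) ≠ 0 := Gv_ne hz hQz
  have hKz : conj' (a : ℂ) • Gv z (tg (l i0) z (Complex.equivRealProdCLM.symm x)) ≠ 0 :=
    smul_ne_zero hca hGne
  apply Subtype.ext
  have hvec : Gv ((Projectivization.mk ℂ z hz).rep)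
      (tg (l i0) ((Projectivization.mk ℂ z hz).rep) (Complex.equivRealProdCLM.symm x))
      = conj' (a : ℂ) • Gv z (tg (l i0) z (Complex.equivRealProdCLM.symm x)) := by
    rw [ha]
    exact Gv_tg_smul (l i0) (hlz i0) a.ne_zero _
  exact (mk_congr hvec _ hKz).trans (mk_unit_smul hGne hca hKz)

lemma continuous_Gmap : Continuous (Gmap l i0) := by
  have hq : IsQuotientMap (Prod.map (resMk (Bset l)) (id : ℝ × ℝ → ℝ × ℝ)) :=
    ((isOpenMap_resMk _).prodMap IsOpenMap.id).isQuotientMap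
      ((continuous_resMk _).prodMap continuous_id)
      ((surjective_resMk _).prodMap Function.surjective_id)
  rw [hq.continuous_iff]
  have hcomp : (Gmap l i0 ∘ Prod.map (resMk (Bset l)) id)
      = fun y : {x : Vnz // mkQ x ∈ Bset l} × (ℝ × ℝ) =>
        (⟨Projectivization.mk ℂ
            (Gv y.1.1.1 (tg (l i0) y.1.1.1 (Complex.equivRealProdCLM.symm y.2)))
            (Gv_ne y.1.1.2 ((mem_Bset_iff l y.1.1.2).1 y.1.2).1),
          mkG_mem_Asetc l y.1.1.2 ((mem_Bset_iff l y.1.1.2).1 y.1.2).1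
            ((mem_Bset_iff l y.1.1.2).1 y.1.2).2
            (normSq_tg_lt (l i0) (((mem_Bset_iff l y.1.1.2).1 y.1.2).2 i0) _)⟩ :
          ↥((Aset l)ᶜ)) := by
    funext y
    exact Gmap_mk l i0 y.1.1.2 y.1.2 y.2
  rw [hcomp]
  have hval : Continuous fun y : {x : Vnz // mkQ x ∈ Bset l} × (ℝ × ℝ) =>
      (y.1.1.1 : Fin 3 → ℂ) :=
    (continuous_subtype_val.comp continuous_subtype_val).comp continuous_fst
  have hwc : Continuous fun y : {x : Vnz // mkQ x ∈ Bset l} × (ℝ × ℝ) =>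
      Complex.equivRealProdCLM.symm y.2 :=
    Complex.equivRealProdCLM.symm.continuous.comp continuous_snd
  have hE : Continuous fun y : {x : Vnz // mkQ x ∈ Bset l} × (ℝ × ℝ) =>
      extC (l i0) y.1.1.1 := (continuous_extC (l i0)).comp hval
  have hE0 : ∀ y : {x : Vnz // mkQ x ∈ Bset l} × (ℝ × ℝ), extC (l i0) y.1.1.1 ≠ 0 :=
    fun y => ((mem_Bset_iff l y.1.1.2).1 y.1.2).2 i0
  have htg : Continuous fun y : {x : Vnz // mkQ x ∈ Bset l} × (ℝ × ℝ) =>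
      tg (l i0) y.1.1.1 (Complex.equivRealProdCLM.symm y.2) := by
    unfold tg
    exact ((continuous_tauC.comp hwc).mul (Complex.continuous_conj.comp hE)).div hE hE0
  have hGv : Continuous fun y : {x : Vnz // mkQ x ∈ Bset l} × (ℝ × ℝ) =>
      Gv y.1.1.1 (tg (l i0) y.1.1.1 (Complex.equivRealProdCLM.symm y.2)) := by
    unfold Gv
    refine continuous_pi fun i => ?_
    exact (Complex.continuous_conj.comp ((continuous_apply i).comp hval)).add
      (htg.mul ((continuous_apply i).comp hval))
  exact Continuous.subtype_mk (continuous_mkQ.comp (Continuous.subtype_mk hGv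
    fun y => Gv_ne y.1.1.2 ((mem_Bset_iff l y.1.1.2).1 y.1.2).1)) _

end CLH
end
/-- For `d ≥ 1` nonzero, pairwise non-proportional real linear forms `ℓ₁, …, ℓ_d`
on `ℝ³`, with corresponding complex lines `ℂLᵢ` and `ℂA₀ = ℂL₁ ∪ … ∪ ℂL_d`,
`Ṽ = C ∩ ℂA₀`, the subspace `ℂP² ∖ (ℝP² ∪ ℂA₀)` is homeomorphic to
`(C ∖ Ṽ) × ℝ²`. -/
theorem complement_lines_homeomorph (d : ℕ) (hd : 1 ≤ d)
    (l : Fin d → ((Fin 3 → ℝ) →ₗ[ℝ] ℝ))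
    (hl : ∀ i, l i ≠ 0)
    (hprop : ∀ i j, i ≠ j → ∀ c : ℝ, l j ≠ c • l i) :
    Nonempty (↥((RP2 ∪ ⋃ i, cLine (l i))ᶜ) ≃ₜ
      (↥(conic \ (conic ∩ ⋃ i, cLine (l i))) × (ℝ × ℝ))) := by
  exact ⟨{ toFun := CLH.Fmap l ⟨0, hd⟩,
           invFun := CLH.Gmap l ⟨0, hd⟩,
           left_inv := CLH.GF_id l ⟨0, hd⟩,
           right_inv := CLH.FG_id l ⟨0, hd⟩,
           continuous_toFun := CLH.continuous_Fmap l ⟨0, hd⟩,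
           continuous_invFun := CLH.continuous_Gmap l ⟨0, hd⟩ }⟩
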